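/- Let k be a perfect field of characteristic p > 0, S = k[x_1,…,x_n], e ≥ 1, I ⊆ S an ideal, R = S/I, and π : S → R the canonical surjection. Then for every R-linear map ψ : F^e_* R → R there exists an S-linear map φ : F^e_* S → S such that φ(F^e_* I) ⊆ I and π(φ(F^e_* s)) = ψ(F^e_* π(s)) for all s ∈ S. -/

import Mathlib

open MvPolynomial

open Finsupp

namespace FedderAux

variable {k : Type*} [Field k] {σ : Type*}

/-- componentwise mod. -/
noncomputable def emodF (q : ℕ) (m : σ →₀ ℕ) : σ →₀ ℕ := m.mapRange (· % q) (Nat.zero_mod q)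

/-- componentwise div. -/
noncomputable def edivF (q : ℕ) (m : σ →₀ ℕ) : σ →₀ ℕ := m.mapRange (· / q) (Nat.zero_div q)

@[simp] lemma emodF_apply (q : ℕ) (m : σ →₀ ℕ) (i : σ) : emodF q m i = m i % q :=
  Finsupp.mapRange_apply

@[simp] lemma edivF_apply (q : ℕ) (m : σ →₀ ℕ) (i : σ) : edivF q m i = m i / q :=
  Finsupp.mapRange_apply

lemma ediv_add_emod (q : ℕ) (m : σ →₀ ℕ) : q • edivF q m + emodF q m = m := by
  ext i
  simp [Nat.div_add_mod]

lemma emodF_smul_add (q : ℕ) (m a : σ →₀ ℕ) (ha : ∀ i, a i < q) :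
    emodF q (q • m + a) = a := by
  ext i
  simp [Nat.mul_add_mod, Nat.mod_eq_of_lt (ha i)]

lemma edivF_smul_add (q : ℕ) (hq : 0 < q) (m a : σ →₀ ℕ) (ha : ∀ i, a i < q) :
    edivF q (q • m + a) = m := by
  ext i
  simp [Nat.mul_add_div hq, Nat.div_eq_of_lt (ha i)]

lemma smul_injF {q : ℕ} (hq : 0 < q) {m₁ m₂ : σ →₀ ℕ} (h : q • m₁ = q • m₂) : m₁ = m₂ := by
  ext i
  have := DFunLike.congr_fun h i
  simp only [Finsupp.smul_apply, smul_eq_mul] at this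
  exact Nat.eq_of_mul_eq_mul_left hq this

/-- The `a`-component of the Frobenius decomposition. -/
noncomputable def Dop (q : ℕ) (rt : k →+* k) (a : σ →₀ ℕ) (s : MvPolynomial σ k) :
    MvPolynomial σ k := by
  classical
  exact ∑ m ∈ s.support,
    if emodF q m = a then monomial (edivF q m) (rt (coeff m s)) else 0

lemma coeff_Dop (q : ℕ) (hq : 0 < q) (rt : k →+* k) (a : σ →₀ ℕ) (ha : ∀ i, a i < q)
    (s : MvPolynomial σ k) (m' : σ →₀ ℕ) :
    coeff m' (Dop q rt a s) = rt (coeff (q • m' + a) s) := by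
  classical
  rw [Dop, coeff_sum]
  have : ∀ m ∈ s.support,
      coeff m' (if emodF q m = a then monomial (edivF q m) (rt (coeff m s)) else 0)
        = if m = q • m' + a then rt (coeff m s) else 0 := by
    intro m _
    by_cases h : m = q • m' + a
    · subst h
      simp [emodF_smul_add q _ a ha, edivF_smul_add q hq _ a ha, coeff_monomial]
    · rw [if_neg h]
      split_ifs with h1
      · rw [coeff_monomial, if_neg]
        intro h2
        exact h (by rw [← ediv_add_emod q m, h1, h2])
      · simp
  rw [Finset.sum_congr rfl this, Finset.sum_ite_eq' s.support (q • m' + a)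
    (fun m => rt (coeff m s))]
  split_ifs with h
  · rfl
  · rw [MvPolynomial.notMem_support_iff.mp h, map_zero]

lemma Dop_add (q : ℕ) (hq : 0 < q) (rt : k →+* k) (a : σ →₀ ℕ) (ha : ∀ i, a i < q)
    (s t : MvPolynomial σ k) :
    Dop q rt a (s + t) = Dop q rt a s + Dop q rt a t := by
  ext m'
  simp [coeff_Dop q hq rt a ha, coeff_add]



variable {k : Type*} [Field k] {σ : Type*} {p : ℕ} [CharP k p]

/-- `w ^ p ^ e` as a sum of monomials. -/
lemma pow_q_repr (hp : p.Prime) (e : ℕ) (w : MvPolynomial σ k) :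
    w ^ p ^ e = ∑ m ∈ w.support, monomial (p ^ e • m) ((coeff m w) ^ p ^ e) := by
  haveI : ExpChar (MvPolynomial σ k) p := ExpChar.prime hp
  have hΦ : ∀ x : MvPolynomial σ k, x ^ p ^ e = iterateFrobenius (MvPolynomial σ k) p e x :=
    fun x => (iterateFrobenius_def p e x).symm
  conv_lhs => rw [w.as_sum, hΦ]
  rw [map_sum]
  refine Finset.sum_congr rfl fun m _ => ?_
  rw [← hΦ, monomial_pow]

lemma coeff_pow_q_smul (hp : p.Prime) (e : ℕ) (w : MvPolynomial σ k) (m : σ →₀ ℕ) :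
    coeff (p ^ e • m) (w ^ p ^ e) = (coeff m w) ^ p ^ e := by
  classical
  have hq : 0 < p ^ e := Nat.pow_pos hp.pos
  rw [pow_q_repr hp e w, coeff_sum]
  have : ∀ m₁ ∈ w.support,
      coeff (p ^ e • m) (monomial (p ^ e • m₁) ((coeff m₁ w) ^ p ^ e))
        = if m₁ = m then (coeff m₁ w) ^ p ^ e else 0 := by
    intro m₁ _
    rw [coeff_monomial]
    congr 1
    simp only [eq_iff_iff]
    exact ⟨fun h => smul_injF hq h, fun h => by rw [h]⟩
  rw [Finset.sum_congr rfl this, Finset.sum_ite_eq' w.support m (fun m₁ => (coeff m₁ w) ^ p ^ e)]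
  split_ifs with h
  · rfl
  · rw [MvPolynomial.notMem_support_iff.mp h, zero_pow hq.ne']

lemma coeff_pow_q_ne (hp : p.Prime) (e : ℕ) (w : MvPolynomial σ k) (v : σ →₀ ℕ)
    (hv : emodF (p ^ e) v ≠ 0) :
    coeff v (w ^ p ^ e) = 0 := by
  classical
  rw [pow_q_repr hp e w, coeff_sum]
  refine Finset.sum_eq_zero fun m _ => ?_
  rw [coeff_monomial, if_neg]
  intro h
  apply hv
  rw [← h]
  ext i
  simp [Nat.mul_mod_right]



/-- Convert a tuple of residues into a `Finsupp` exponent. -/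
noncomputable def toF {n q : ℕ} (a : Fin n → Fin q) : Fin n →₀ ℕ :=
  Finsupp.equivFunOnFinite.symm fun i => (a i : ℕ)

@[simp] lemma toF_apply {n q : ℕ} (a : Fin n → Fin q) (i : Fin n) : toF a i = a i := rfl

lemma toF_lt {n q : ℕ} (a : Fin n → Fin q) : ∀ i, toF a i < q := fun i => (a i).2

lemma sum_Dop_pow (hp : p.Prime) (e n : ℕ) (rt : k →+* k) (hrt : ∀ c, rt c ^ p ^ e = c)
    (s : MvPolynomial (Fin n) k) :
    ∑ a : Fin n → Fin (p ^ e),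
      (Dop (p ^ e) rt (toF a) s) ^ p ^ e * monomial (toF a) 1 = s := by
  classical
  haveI : ExpChar (MvPolynomial (Fin n) k) p := ExpChar.prime hp
  have hq : 0 < p ^ e := Nat.pow_pos hp.pos
  have hΦ : ∀ x : MvPolynomial (Fin n) k,
      x ^ p ^ e = iterateFrobenius (MvPolynomial (Fin n) k) p e x :=
    fun x => (iterateFrobenius_def p e x).symm
  have step1 : ∀ a : Fin n → Fin (p ^ e),
      (Dop (p ^ e) rt (toF a) s) ^ p ^ e * monomial (toF a) 1
        = ∑ m ∈ s.support,
            if emodF (p ^ e) m = toF a then monomial m (coeff m s) else 0 := by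
    intro a
    rw [Dop, hΦ, map_sum, Finset.sum_mul]
    refine Finset.sum_congr rfl fun m _ => ?_
    rw [apply_ite (iterateFrobenius (MvPolynomial (Fin n) k) p e), map_zero, ← hΦ,
      monomial_pow, hrt, ite_mul, zero_mul, monomial_mul, mul_one]
    by_cases h : emodF (p ^ e) m = toF a
    · rw [if_pos h, if_pos h, ← h, ediv_add_emod]
    · rw [if_neg h, if_neg h]
  rw [Finset.sum_congr rfl fun a _ => step1 a, Finset.sum_comm]
  conv_rhs => rw [s.as_sum]
  refine Finset.sum_congr rfl fun m _ => ?_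
  have hcond : ∀ a : Fin n → Fin (p ^ e),
      (emodF (p ^ e) m = toF a) ↔ a = fun i => (⟨m i % p ^ e, Nat.mod_lt _ hq⟩ : Fin (p ^ e)) := by
    intro a
    constructor
    · intro h
      funext i
      have := DFunLike.congr_fun h i
      simp only [emodF_apply, toF_apply] at this
      exact Fin.ext this.symm
    · intro h
      subst h
      ext i
      simp
  simp only [hcond]
  rw [Finset.sum_ite_eq' Finset.univ _ (fun _ => monomial m (coeff m s)),
    if_pos (Finset.mem_univ _)]

lemma uniq (hp : p.Prime) (e n : ℕ) (w : (Fin n → Fin (p ^ e)) → MvPolynomial (Fin n) k)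
    (h : ∑ a : Fin n → Fin (p ^ e), (w a) ^ p ^ e * monomial (toF a) 1 = 0)
    (b : Fin n → Fin (p ^ e)) : w b = 0 := by
  classical
  have hq : 0 < p ^ e := Nat.pow_pos hp.pos
  ext m'
  rw [coeff_zero]
  have key : coeff (p ^ e • m' + toF b) (∑ a : Fin n → Fin (p ^ e),
      (w a) ^ p ^ e * monomial (toF a) 1) = (coeff m' (w b)) ^ p ^ e := by
    rw [coeff_sum]
    rw [Finset.sum_eq_single b ?h₀ (fun hb => absurd (Finset.mem_univ b) hb)]
    · rw [coeff_mul_monomial', if_pos (self_le_add_left _ _), add_tsub_cancel_right, mul_one,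
        coeff_pow_q_smul hp]
    · intro a _ hab
      rw [coeff_mul_monomial']
      split_ifs with h1
      · rw [mul_one]
        apply coeff_pow_q_ne hp
        intro hcontra
        apply hab
        funext i
        have hci : (p ^ e • m' + toF b - toF a) i % p ^ e = 0 := by
          have := DFunLike.congr_fun hcontra i
          simpa using this
        have hval : (p ^ e • m' + toF b - toF a) i = p ^ e * m' i + (b i : ℕ) - (a i : ℕ) := by
          simp [Finsupp.tsub_apply]
        rw [hval] at hci
        have hle : (a i : ℕ) ≤ p ^ e * m' i + (b i : ℕ) := by
          have := h1 i
          simpa using this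
        obtain ⟨c, hc⟩ := Nat.dvd_of_mod_eq_zero hci
        have h2 : p ^ e * m' i + (b i : ℕ) = p ^ e * c + (a i : ℕ) := by
          have := Nat.sub_add_cancel hle
          omega
        have hA : (p ^ e * c + (a i : ℕ)) % p ^ e = (a i : ℕ) := by
          rw [Nat.mul_add_mod]; exact Nat.mod_eq_of_lt (a i).2
        have hB : (p ^ e * m' i + (b i : ℕ)) % p ^ e = (b i : ℕ) := by
          rw [Nat.mul_add_mod]; exact Nat.mod_eq_of_lt (b i).2
        exact Fin.ext (by rw [← hA, ← h2, hB])
      · rfl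
  rw [h, coeff_zero] at key
  exact pow_eq_zero_iff hq.ne' |>.mp key.symm

lemma Dop_semilinear (hp : p.Prime) (e n : ℕ) (rt : k →+* k) (hrt : ∀ c, rt c ^ p ^ e = c)
    (s x : MvPolynomial (Fin n) k) (a : Fin n → Fin (p ^ e)) :
    Dop (p ^ e) rt (toF a) (s ^ p ^ e * x) = s * Dop (p ^ e) rt (toF a) x := by
  classical
  haveI : ExpChar (MvPolynomial (Fin n) k) p := ExpChar.prime hp
  have hΦ : ∀ y : MvPolynomial (Fin n) k,
      y ^ p ^ e = iterateFrobenius (MvPolynomial (Fin n) k) p e y :=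
    fun y => (iterateFrobenius_def p e y).symm
  have h0 : ∑ b : Fin n → Fin (p ^ e),
      (Dop (p ^ e) rt (toF b) (s ^ p ^ e * x) - s * Dop (p ^ e) rt (toF b) x) ^ p ^ e
        * monomial (toF b) 1 = 0 := by
    have expand : ∀ b : Fin n → Fin (p ^ e),
        (Dop (p ^ e) rt (toF b) (s ^ p ^ e * x) - s * Dop (p ^ e) rt (toF b) x) ^ p ^ e
          = (Dop (p ^ e) rt (toF b) (s ^ p ^ e * x)) ^ p ^ e
            - s ^ p ^ e * (Dop (p ^ e) rt (toF b) x) ^ p ^ e := by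
      intro b
      rw [hΦ, map_sub, ← hΦ, ← hΦ, mul_pow]
    simp only [expand, sub_mul, mul_assoc]
    rw [Finset.sum_sub_distrib, ← Finset.mul_sum, sum_Dop_pow hp e n rt hrt,
      sum_Dop_pow hp e n rt hrt, sub_self]
  have := uniq hp e n _ h0 a
  rwa [sub_eq_zero] at this

end FedderAux

open FedderAux

/-- Fedder's Lemma, part (a): every `R`-linear map `F^e_* R → R` on
`R = S/I` lifts to an `S`-linear map `F^e_* S → S` compatible with `I`. -/
theorem stmt_6 {k : Type*} [Field k] (p : ℕ) (hp : p.Prime) [CharP k p]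
    [PerfectField k]
    (n e : ℕ) (he : 1 ≤ e)
    (I : Ideal (MvPolynomial (Fin n) k))
    (ψ : MvPolynomial (Fin n) k ⧸ I → MvPolynomial (Fin n) k ⧸ I)
    (hadd : ∀ x y, ψ (x + y) = ψ x + ψ y)
    (hlin : ∀ r x, ψ (r ^ p ^ e * x) = r * ψ x) :
    ∃ φ : MvPolynomial (Fin n) k → MvPolynomial (Fin n) k,
      (∀ x y, φ (x + y) = φ x + φ y) ∧
      (∀ s x, φ (s ^ p ^ e * x) = s * φ x) ∧
      (∀ x ∈ I, φ x ∈ I) ∧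
      (∀ s, Ideal.Quotient.mk I (φ s) = ψ (Ideal.Quotient.mk I s)) := by
  classical
  haveI : ExpChar k p := ExpChar.prime hp
  have hq : 0 < p ^ e := Nat.pow_pos hp.pos
  set rt : k →+* k := (iterateFrobeniusEquiv k p e).symm.toRingHom with hrtdef
  have hrt : ∀ c, rt c ^ p ^ e = c := fun c => by
    have h := (iterateFrobeniusEquiv k p e).apply_symm_apply c
    rwa [iterateFrobeniusEquiv_def] at h
  have hψ0 : ψ 0 = 0 := by
    have := hadd 0 0
    simp only [add_zero] at this
    exact right_eq_add.mp this
  set c : (Fin n → Fin (p ^ e)) → MvPolynomial (Fin n) k := fun a =>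
    (Ideal.Quotient.mk_surjective (ψ (Ideal.Quotient.mk I (monomial (toF a) 1)))).choose
    with hcdef
  have hc : ∀ a, Ideal.Quotient.mk I (c a) = ψ (Ideal.Quotient.mk I (monomial (toF a) 1)) :=
    fun a => (Ideal.Quotient.mk_surjective _).choose_spec
  set φ : MvPolynomial (Fin n) k → MvPolynomial (Fin n) k := fun s =>
    ∑ a : Fin n → Fin (p ^ e), Dop (p ^ e) rt (toF a) s * c a with hφdef
  have hφadd : ∀ x y, φ (x + y) = φ x + φ y := by
    intro x y
    simp only [hφdef]
    rw [← Finset.sum_add_distrib]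
    refine Finset.sum_congr rfl fun a _ => ?_
    rw [Dop_add (p ^ e) hq rt (toF a) (toF_lt a), add_mul]
  have hφlin : ∀ s x, φ (s ^ p ^ e * x) = s * φ x := by
    intro s x
    simp only [hφdef]
    rw [Finset.mul_sum]
    refine Finset.sum_congr rfl fun a _ => ?_
    rw [Dop_semilinear hp e n rt hrt, mul_assoc]
  have hcompat : ∀ s, Ideal.Quotient.mk I (φ s) = ψ (Ideal.Quotient.mk I s) := by
    intro s
    have lhs : Ideal.Quotient.mk I (φ s)
        = ∑ a : Fin n → Fin (p ^ e), Ideal.Quotient.mk I (Dop (p ^ e) rt (toF a) s)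
            * ψ (Ideal.Quotient.mk I (monomial (toF a) 1)) := by
      simp only [hφdef]
      rw [map_sum]
      exact Finset.sum_congr rfl fun a _ => by rw [map_mul, hc]
    let ψ' : (MvPolynomial (Fin n) k ⧸ I) →+ (MvPolynomial (Fin n) k ⧸ I) :=
      AddMonoidHom.mk' ψ hadd
    have rhs : ψ (Ideal.Quotient.mk I s)
        = ∑ a : Fin n → Fin (p ^ e), Ideal.Quotient.mk I (Dop (p ^ e) rt (toF a) s)
            * ψ (Ideal.Quotient.mk I (monomial (toF a) 1)) := by
      conv_lhs => rw [← sum_Dop_pow hp e n rt hrt s]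
      rw [show ψ = ⇑ψ' from rfl, map_sum (Ideal.Quotient.mk I), map_sum ψ']
      refine Finset.sum_congr rfl fun a _ => ?_
      rw [map_mul, map_pow]
      exact hlin _ _
    rw [lhs, rhs]
  refine ⟨φ, hφadd, hφlin, ?_, hcompat⟩
  intro x hx
  rw [← Ideal.Quotient.eq_zero_iff_mem] at hx ⊢
  rw [hcompat x, hx, hψ0]
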